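/- Comparison of the opposite-biased value with the full-attention value: assume ρ > 0. Then V̲_opp(0) = U^FA(0), V̄_opp(1) = U^FA(1), and the function V_opp defined by V_opp(p) = V̲_opp(p) for p ≤ p* and V_opp(p) = V̄_opp(p) for p ≥ p* satisfies V_opp(p) < U^FA(p) for every p ∈ (0,1). -/
import Mathlib


set_option linter.unusedVariables false
set_option maxHeartbeats 800000

noncomputable section

/-- Full-attention value `U^FA(p)`. -/
def UFA (urR ulR urL ulL lam rho c p : ℝ) : ℝ :=
  (lam * (p * urR + (1 - p) * ulL) - c) / (rho + lam)

/-- The absorbing belief `p*`. -/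
def pstar (urR ulR urL ulL lam rho c : ℝ) : ℝ :=
  (ulL * rho + c) / ((urR * rho + c) + (ulL * rho + c))

/-- Left branch of the opposite-biased value (for `ρ > 0`); since `ρ/λ > 0`, the real-power
formula automatically extends by continuity to `p = 0` with value `(u_ℓ^L λ − c)/(λ+ρ)`. -/
def Vlopp (urR ulR urL ulL lam rho c p : ℝ) : ℝ :=
  -(c / rho) * p + ((ulL * lam - c) / (lam + rho)) * (1 - p)
    + (lam / (rho * (2 * rho + lam))) * (lam * (urR * rho + c) / (lam + rho))
      * (((1 - pstar urR ulR urL ulL lam rho c) / pstar urR ulR urL ulL lam rho c)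
          * (p / (1 - p))) ^ (rho / lam) * p

/-- Right branch of the opposite-biased value (for `ρ > 0`); extends by continuity to
`p = 1` with value `(u_r^R λ − c)/(λ+ρ)`. -/
def Vhopp (urR ulR urL ulL lam rho c p : ℝ) : ℝ :=
  -(c / rho) * (1 - p) + ((urR * lam - c) / (lam + rho)) * p
    + (lam / (rho * (2 * rho + lam))) * (lam * (ulL * rho + c) / (lam + rho))
      * ((pstar urR ulR urL ulL lam rho c / (1 - pstar urR ulR urL ulL lam rho c))
          * ((1 - p) / p)) ^ (rho / lam) * (1 - p)

/-- Comparison of the opposite-biased value with the full-attention value: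
they coincide at the endpoints `0` and `1`, and `V_opp < U^FA` strictly on `(0,1)`. -/
theorem Vopp_vs_UFA
    (urR ulR urL ulL lam rho c : ℝ)
    (h_urR : urR > max 0 ulR) (h_ulL : ulL > max 0 urL)
    (h_lam : 0 < lam) (h_rho : 0 < rho) (h_c : 0 ≤ c) :
    Vlopp urR ulR urL ulL lam rho c 0 = UFA urR ulR urL ulL lam rho c 0
    ∧ Vhopp urR ulR urL ulL lam rho c 1 = UFA urR ulR urL ulL lam rho c 1
    ∧ ∀ p ∈ Set.Ioo (0 : ℝ) 1,
        (if p ≤ pstar urR ulR urL ulL lam rho c then Vlopp urR ulR urL ulL lam rho c p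
          else Vhopp urR ulR urL ulL lam rho c p)
          < UFA urR ulR urL ulL lam rho c p := by
  have hurR : 0 < urR := lt_of_le_of_lt (le_max_left 0 ulR) h_urR
  have hulL : 0 < ulL := lt_of_le_of_lt (le_max_left 0 urL) h_ulL
  have hA : 0 < urR * rho + c := by positivity
  have hB : 0 < ulL * rho + c := by positivity
  have hAB : 0 < (urR * rho + c) + (ulL * rho + c) := by linarith
  have hlr : 0 < lam + rho := by linarith
  have hrl : 0 < rho + lam := by linarith
  have h2rl : 0 < 2 * rho + lam := by linarith
  have hq0 : 0 < pstar urR ulR urL ulL lam rho c := div_pos hB hAB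
  have hq1 : pstar urR ulR urL ulL lam rho c < 1 := by
    rw [pstar, div_lt_one hAB]; linarith
  have hexp : 0 < rho / lam := by positivity
  refine ⟨?_, ?_, ?_⟩
  · simp only [Vlopp, UFA, mul_zero, add_zero, mul_one, sub_zero, neg_zero, zero_add]
    ring
  · simp only [Vhopp, UFA, sub_self, mul_zero, zero_add, mul_one, add_zero]
    ring
  · rintro p ⟨hp0, hp1⟩
    set q := pstar urR ulR urL ulL lam rho c with hq
    have hq1' : 0 < 1 - q := by linarith
    have hp1' : 0 < 1 - p := by linarith
    by_cases hpq : p ≤ q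
    · rw [if_pos hpq]
      rw [Vlopp, UFA, ← hq]
      set x := ((1 - q) / q) * (p / (1 - p)) with hx
      have hx0 : 0 ≤ x := by positivity
      have hx1 : x ≤ 1 := by
        rw [hx, div_mul_div_comm, div_le_one (by positivity)]
        nlinarith
      set t := x ^ (rho / lam) with ht
      have ht0 : 0 ≤ t := Real.rpow_nonneg hx0 _
      have ht1 : t ≤ 1 := Real.rpow_le_one hx0 hx1 hexp.le
      have key : (lam * (p * urR + (1 - p) * ulL) - c) / (rho + lam)
          - (-(c / rho) * p + ((ulL * lam - c) / (lam + rho)) * (1 - p)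
            + (lam / (rho * (2 * rho + lam))) * (lam * (urR * rho + c) / (lam + rho)) * t * p)
          = p * (lam * (urR * rho + c)) * ((2 * rho + lam) - lam * t)
              / (rho * (lam + rho) * (2 * rho + lam)) := by
        field_simp
        ring
      have hpos : 0 < p * (lam * (urR * rho + c)) * ((2 * rho + lam) - lam * t)
          / (rho * (lam + rho) * (2 * rho + lam)) := by
        apply div_pos _ (by positivity)
        have : lam * t ≤ lam * 1 := mul_le_mul_of_nonneg_left ht1 h_lam.le
        apply mul_pos (by positivity)
        linarith
      linarith
    · rw [if_neg hpq]
      push_neg at hpq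
      rw [Vhopp, UFA, ← hq]
      set x := (q / (1 - q)) * ((1 - p) / p) with hx
      have hx0 : 0 ≤ x := by positivity
      have hx1 : x ≤ 1 := by
        rw [hx, div_mul_div_comm, div_le_one (by positivity)]
        nlinarith
      set t := x ^ (rho / lam) with ht
      have ht0 : 0 ≤ t := Real.rpow_nonneg hx0 _
      have ht1 : t ≤ 1 := Real.rpow_le_one hx0 hx1 hexp.le
      have key : (lam * (p * urR + (1 - p) * ulL) - c) / (rho + lam)
          - (-(c / rho) * (1 - p) + ((urR * lam - c) / (lam + rho)) * p
            + (lam / (rho * (2 * rho + lam))) * (lam * (ulL * rho + c) / (lam + rho)) * t * (1 - p))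
          = (1 - p) * (lam * (ulL * rho + c)) * ((2 * rho + lam) - lam * t)
              / (rho * (lam + rho) * (2 * rho + lam)) := by
        field_simp
        ring
      have hpos : 0 < (1 - p) * (lam * (ulL * rho + c)) * ((2 * rho + lam) - lam * t)
          / (rho * (lam + rho) * (2 * rho + lam)) := by
        apply div_pos _ (by positivity)
        have : lam * t ≤ lam * 1 := mul_le_mul_of_nonneg_left ht1 h_lam.le
        apply mul_pos (by positivity)
        linarith
      linarith
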